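/- arXiv:0811.0325 — 3 statements merged into one kernel-verified Lean document; each statement's English description precedes it below -/
import Mathlib

section
/- Let x, y, z : ℕ → ℤ → F₂ be families of F₂-valued sequences with x̃_i(t) = Σ_{τ=0}^{i-1} x_{i-τ}(t-τ) and ỹ, z̃ defined analogously. Fix integers t, δx, δy, δz and natural numbers i, j, k with i, j, k ≥ 1. Define C(s) = x̃_i(s-δx-1) + ỹ_{j+1}(s-δy) + z̃_{k-1}(s-δz+1) and D(s) = x̃_{i-1}(s-δx) + ỹ_{j+1}(s-δy-1) + z̃_k(s-δz+1). Then C(t-1) + D(t) = x̃_i(t-δx-2) + x̃_{i-1}(t-δx) + z_k(t-δz+1). -/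
/-- Coded symbol `x̃_i(t) = Σ_{τ=0}^{i-1} x_{i-τ}(t-τ)`; in particular `x̃_0(t) = 0`. -/
def tilde (x : ℕ → ℤ → ZMod 2) (i : ℕ) (t : ℤ) : ZMod 2 :=
  ∑ τ ∈ Finset.range i, x (i - τ) (t - (τ : ℤ))

lemma tilde_succ (x : ℕ → ℤ → ZMod 2) (n : ℕ) (t : ℤ) :
    tilde x (n + 1) t = x (n + 1) t + tilde x n (t - 1) := by
  unfold tilde
  rw [Finset.sum_range_succ']
  rw [add_comm]
  congr 1
  · simp
  · apply Finset.sum_congr rfl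
    intro τ hτ
    congr 1
    · omega
    · push_cast; ring

/-- Combining the transmissions `C(t-1)` and `D(t)` of neighbours `C[P]` and `D[P]`. -/
theorem neighbour_sum_CD (x y z : ℕ → ℤ → ZMod 2) (t δx δy δz : ℤ) (i j k : ℕ)
    (hi : 1 ≤ i) (hj : 1 ≤ j) (hk : 1 ≤ k)
    (C D : ℤ → ZMod 2)
    (hC : ∀ s, C s =
      tilde x i (s - δx - 1) + tilde y (j + 1) (s - δy) + tilde z (k - 1) (s - δz + 1))
    (hD : ∀ s, D s =
      tilde x (i - 1) (s - δx) + tilde y (j + 1) (s - δy - 1) + tilde z k (s - δz + 1)) :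
    C (t - 1) + D t =
      tilde x i (t - δx - 2) + tilde x (i - 1) (t - δx) + z k (t - δz + 1) := by
  rw [hC, hD]
  obtain ⟨k', rfl⟩ := Nat.exists_eq_add_of_le hk
  have hz := tilde_succ z k' (t - δz + 1)
  have h2 : ∀ a : ZMod 2, a + a = 0 := by decide
  have e1 : t - 1 - δx - 1 = t - δx - 2 := by ring
  have e2 : t - 1 - δy = t - δy - 1 := by ring
  have e3 : t - 1 - δz + 1 = t - δz + 1 - 1 := by ring
  have e4 : (1 + k') - 1 = k' := by omega
  rw [e1, e2, e3, e4, add_comm 1 k'] at *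
  rw [hz]
  ring_nf
  simp [show (2:ZMod 2)=0 from rfl]
end

section
/- (Claim 1) Let x, y, z : ℕ → ℤ → F₂ be families of F₂-valued sequences with x̃_i(t) = Σ_{τ=0}^{i-1} x_{i-τ}(t-τ) and ỹ, z̃ defined analogously. Fix integers t, δx, δy, δz and natural numbers i, j, k with i, j, k ≥ 1. Define P(s) = x̃_i(s-δx) + ỹ_j(s-δy) + z̃_k(s-δz), A(s) = x̃_{i+1}(s-δx) + ỹ_{j-1}(s-δy+1) + z̃_k(s-δz-1), B(s) = x̃_{i+1}(s-δx-1) + ỹ_j(s-δy+1) + z̃_{k-1}(s-δz), C(s) = x̃_i(s-δx-1) + ỹ_{j+1}(s-δy) + z̃_{k-1}(s-δz+1), D(s) = x̃_{i-1}(s-δx) + ỹ_{j+1}(s-δy-1) + z̃_k(s-δz+1), E(s) = x̃_{i-1}(s-δx+1) + ỹ_j(s-δy-1) + z̃_{k+1}(s-δz), F(s) = x̃_i(s-δx+1) + ỹ_{j-1}(s-δy) + z̃_{k+1}(s-δz-1). Then P(t+1) = A(t-1) + B(t) + C(t-1) + D(t) + E(t-1) + F(t) + P(t-2). -/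
/-- Claim 1: an internal node `P` can compute its next transmission `P(t+1)` from
its neighbours' transmissions in the two preceding time slots and `P(t-2)`. -/
theorem internal_node_update (x y z : ℕ → ℤ → ZMod 2) (t δx δy δz : ℤ) (i j k : ℕ)
    (hi : 1 ≤ i) (hj : 1 ≤ j) (hk : 1 ≤ k)
    (P A B C D E F : ℤ → ZMod 2)
    (hP : ∀ s, P s =
      tilde x i (s - δx) + tilde y j (s - δy) + tilde z k (s - δz))
    (hA : ∀ s, A s =
      tilde x (i + 1) (s - δx) + tilde y (j - 1) (s - δy + 1) + tilde z k (s - δz - 1))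
    (hB : ∀ s, B s =
      tilde x (i + 1) (s - δx - 1) + tilde y j (s - δy + 1) + tilde z (k - 1) (s - δz))
    (hC : ∀ s, C s =
      tilde x i (s - δx - 1) + tilde y (j + 1) (s - δy) + tilde z (k - 1) (s - δz + 1))
    (hD : ∀ s, D s =
      tilde x (i - 1) (s - δx) + tilde y (j + 1) (s - δy - 1) + tilde z k (s - δz + 1))
    (hE : ∀ s, E s =
      tilde x (i - 1) (s - δx + 1) + tilde y j (s - δy - 1) + tilde z (k + 1) (s - δz))
    (hF : ∀ s, F s =
      tilde x i (s - δx + 1) + tilde y (j - 1) (s - δy) + tilde z (k + 1) (s - δz - 1)) :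
    P (t + 1) =
      A (t - 1) + B t + C (t - 1) + D t + E (t - 1) + F t + P (t - 2) := by
  rw [hP, hA, hB, hC, hD, hE, hF, hP]
  ring_nf
  abel_nf
  simp [CharTwo.two_eq_zero, two_smul]
end

section
/- (Claim 2) Let x, y, z : ℕ → ℤ → F₂ be families of F₂-valued sequences with x̃_i(t) = Σ_{τ=0}^{i-1} x_{i-τ}(t-τ) and ỹ, z̃ defined analogously. Fix integers t, δx, δy, δz and natural numbers i, j, k with i, j, k ≥ 1. Define Q_x(s) = x̃_i(s-δx), Q_y(s) = ỹ_j(s-δy), Q_z(s) = z̃_k(s-δz), B_y(s) = ỹ_j(s-δy+1), B_z(s) = z̃_{k-1}(s-δz), C(s) = x̃_i(s-δx-1) + ỹ_{j+1}(s-δy) + z̃_{k-1}(s-δz+1), D(s) = x̃_{i-1}(s-δx) + ỹ_{j+1}(s-δy-1) + z̃_k(s-δz+1), and E_x(s) = x̃_{i-1}(s-δx+1). Then the following three identities hold: (i) Q_x(t+1) = x_i(t+1-δx) + E_x(t-1); (ii) Q_y(t+1) = B_y(t); (iii) Q_z(t+1) = B_z(t) + C(t-1) + D(t) + E_x(t-1)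 + Q_x(t-2). -/
/-- Claim 2: a node `Q` on the left edge of the network can compute its three
transmitted components `Q_x(t+1)`, `Q_y(t+1)`, `Q_z(t+1)` from its own source symbol,
its own past transmission and the transmissions of its neighbours `B[Q]`, `C[Q]`,
`D[Q]`, `E[Q]`. -/
theorem edge_node_update (x y z : ℕ → ℤ → ZMod 2) (t δx δy δz : ℤ) (i j k : ℕ)
    (hi : 1 ≤ i) (hj : 1 ≤ j) (hk : 1 ≤ k)
    (Qx Qy Qz By Bz C D Ex : ℤ → ZMod 2)
    (hQx : ∀ s, Qx s = tilde x i (s - δx))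
    (hQy : ∀ s, Qy s = tilde y j (s - δy))
    (hQz : ∀ s, Qz s = tilde z k (s - δz))
    (hBy : ∀ s, By s = tilde y j (s - δy + 1))
    (hBz : ∀ s, Bz s = tilde z (k - 1) (s - δz))
    (hC : ∀ s, C s =
      tilde x i (s - δx - 1) + tilde y (j + 1) (s - δy) + tilde z (k - 1) (s - δz + 1))
    (hD : ∀ s, D s =
      tilde x (i - 1) (s - δx) + tilde y (j + 1) (s - δy - 1) + tilde z k (s - δz + 1))
    (hEx : ∀ s, Ex s = tilde x (i - 1) (s - δx + 1)) :
    Qx (t + 1) = x i (t + 1 - δx) + Ex (t - 1) ∧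
    Qy (t + 1) = By t ∧
    Qz (t + 1) = Bz t + C (t - 1) + D t + Ex (t - 1) + Qx (t - 2) := by
  obtain ⟨i, rfl⟩ : ∃ n, i = n + 1 := ⟨i - 1, by omega⟩
  have h2 : ∀ a : ZMod 2, a + a = 0 := by decide
  refine ⟨?_, ?_, ?_⟩
  · have e : t + 1 - δx - 1 = t - 1 - δx + 1 := by ring
    rw [hQx, hEx, tilde_succ, e, Nat.add_sub_cancel]
  · rw [hQy, hBy]
    ring_nf
  · rw [hQz, hBz, hC, hD, hEx, hQx]
    have e1 : t - 1 - δx - 1 = t - 2 - δx := by ring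
    have e2 : t - 1 - δy = t - δy - 1 := by ring
    have e3 : t - 1 - δz + 1 = t - δz := by ring
    have e4 : t - 1 - δx + 1 = t - δx := by ring
    have e5 : t - δz + 1 = t + 1 - δz := by ring
    rw [e1, e2, e3, e4, e5]
    simp only [Nat.add_sub_cancel]
    have h4 : ∀ a b c d f : ZMod 2,
        f = (a + (b + c + a) + (d + c + f) + d + b) := by decide
    apply h4
end
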